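/- arXiv:1801.07087 — 2 statements merged into one kernel-verified Lean document; each statement's English description precedes it below -/
import Mathlib

section
/- If a bounded sequence (z_k) in ℝ^N has the property that ‖z_k − z⋆‖ converges for every z⋆ in a set S with nonempty interior, then (z_k) has at most one accumulation point, hence converges. -/
open Filter

lemma eq_of_norm_sub_eq_on_open {E : Type*} [NormedAddCommGroup E] [InnerProductSpace ℝ E]
    {U : Set E} (hU : IsOpen U) (hne : U.Nonempty) {a b : E}
    (h : ∀ w ∈ U, ‖a - w‖ = ‖b - w‖) : a = b := by
  obtain ⟨w0, hw0⟩ := hne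
  obtain ⟨ε, hε, hball⟩ := Metric.isOpen_iff.1 hU w0 hw0
  by_contra hab
  have hd : a - b ≠ 0 := sub_ne_zero.2 hab
  have hpos : 0 < ‖a - b‖ := norm_pos_iff.2 hd
  set t : ℝ := ε / (2 * ‖a - b‖) with ht_def
  have ht : 0 < t := div_pos hε (by positivity)
  set w1 : E := w0 + t • (a - b) with hw1_def
  have hw1 : w1 ∈ U := by
    apply hball
    simp only [Metric.mem_ball, dist_eq_norm, hw1_def, add_sub_cancel_left, norm_smul,
      Real.norm_eq_abs, abs_of_pos ht, ht_def]
    have heq : ε / (2 * ‖a - b‖) * ‖a - b‖ = ε / 2 := by field_simp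
    rw [abs_of_pos (by positivity : (0:ℝ) < ε / (2 * ‖a - b‖)), heq]; linarith
  have h0 : ‖a - w0‖ ^ 2 = ‖b - w0‖ ^ 2 := by rw [h w0 hw0]
  have h1 : ‖a - w1‖ ^ 2 = ‖b - w1‖ ^ 2 := by rw [h w1 hw1]
  rw [norm_sub_sq_real, norm_sub_sq_real] at h0 h1
  have key : (inner ℝ (a - b) (w1 - w0) : ℝ) = 0 := by
    simp only [inner_sub_left, inner_sub_right]
    linarith
  rw [show w1 - w0 = t • (a - b) by rw [hw1_def]; abel] at key
  rw [real_inner_smul_right, real_inner_self_eq_norm_mul_norm] at key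
  have : t * (‖a - b‖ * ‖a - b‖) > 0 := by positivity
  linarith

/-- If a bounded sequence (z_k) in ℝ^N has the property that
‖z_k − z⋆‖ converges for every z⋆ in a set S with nonempty interior, then (z_k)
has at most one accumulation point, hence converges. -/
theorem stmt_14 (N : ℕ) (z : ℕ → EuclideanSpace ℝ (Fin N))
    (hbdd : Bornology.IsBounded (Set.range z))
    (S : Set (EuclideanSpace ℝ (Fin N))) (hS : (interior S).Nonempty)
    (hconv : ∀ zs ∈ S, ∃ d : ℝ, Tendsto (fun k => ‖z k - zs‖) atTop (nhds d)) :
    ∃ zhat : EuclideanSpace ℝ (Fin N), Tendsto z atTop (nhds zhat) := by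
  obtain ⟨a, -, φ, hφ, hφa⟩ :=
    tendsto_subseq_of_bounded hbdd (x := z) (fun n => Set.mem_range_self n)
  refine ⟨a, tendsto_of_subseq_tendsto fun ns hns => ?_⟩
  obtain ⟨b, -, ψ, hψ, hψb⟩ :=
    tendsto_subseq_of_bounded hbdd (x := z ∘ ns) (fun n => Set.mem_range_self (ns n))
  have hba : b = a := by
    refine eq_of_norm_sub_eq_on_open isOpen_interior hS fun w hw => ?_
    obtain ⟨d, hd⟩ := hconv w (interior_subset hw)
    have hb : Tendsto (fun k => ‖z (ns (ψ k)) - w‖) atTop (nhds ‖b - w‖) :=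
      ((continuous_norm.comp (continuous_id.sub continuous_const)).continuousAt.tendsto.comp hψb)
    have hb' : Tendsto (fun k => ‖z (ns (ψ k)) - w‖) atTop (nhds d) :=
      hd.comp ((hns.comp hψ.tendsto_atTop))
    have ha : Tendsto (fun k => ‖z (φ k) - w‖) atTop (nhds ‖a - w‖) :=
      ((continuous_norm.comp (continuous_id.sub continuous_const)).continuousAt.tendsto.comp hφa)
    have ha' : Tendsto (fun k => ‖z (φ k) - w‖) atTop (nhds d) :=
      hd.comp hφ.tendsto_atTop
    rw [tendsto_nhds_unique hb hb', tendsto_nhds_unique ha ha']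
  exact ⟨ψ, hba ▸ hψb⟩
end

section
/- Let C ⊆ ℝ^M be closed convex with K-metric projection P_C, and suppose for each k ∈ ℕ, w_{k+1} = w_k − μ_k (w_k − P_{C_k}(w_k)) with μ_k ∈ [ε₁, 2−ε₂] (ε₁,ε₂ > 0), where each C_k is closed convex and ∩_k C_k ⊇ {w⋆} is nonempty. Then Σ_k μ_k(2−μ_k) ‖w_k − P_{C_k}(w_k)‖_K² ≤ ‖w_0 − w⋆‖_K², and consequently ‖w_k − P_{C_k}(w_k)‖_K → 0. -/
open Filter RealInnerProductSpace

/-- Let (C_k) be closed convex sets in a real inner product space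
(e.g. ℝ^M with the K-metric) with common point w⋆ ∈ ∩_k C_k, and suppose
w_{k+1} = w_k − μ_k (w_k − P_{C_k}(w_k)) with μ_k ∈ [ε₁, 2−ε₂], ε₁, ε₂ > 0,
where p k = P_{C_k}(w_k) is the metric projection. Then
Σ_{k<n} μ_k(2−μ_k)‖w_k − P_{C_k}(w_k)‖² ≤ ‖w_0 − w⋆‖² for every n, and
consequently ‖w_k − P_{C_k}(w_k)‖ → 0. -/
theorem stmt_19 (E : Type*) [NormedAddCommGroup E] [InnerProductSpace ℝ E]
    [FiniteDimensional ℝ E]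
    (C : ℕ → Set E) (hCcl : ∀ k, IsClosed (C k)) (hCcv : ∀ k, Convex ℝ (C k))
    (wstar : E) (hws : ∀ k, wstar ∈ C k)
    (ε₁ ε₂ : ℝ) (hε₁ : 0 < ε₁) (hε₂ : 0 < ε₂)
    (μ : ℕ → ℝ) (hμ : ∀ k, ε₁ ≤ μ k ∧ μ k ≤ 2 - ε₂)
    (w p : ℕ → E)
    (hp : ∀ k, p k ∈ C k ∧ ∀ v ∈ C k, ‖w k - p k‖ ≤ ‖w k - v‖)
    (hrec : ∀ k, w (k + 1) = w k - μ k • (w k - p k)) :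
    (∀ n : ℕ, ∑ k ∈ Finset.range n, μ k * (2 - μ k) * ‖w k - p k‖ ^ 2 ≤
        ‖w 0 - wstar‖ ^ 2) ∧
    Tendsto (fun k => ‖w k - p k‖) atTop (nhds 0) := by
  -- projection variational inequality
  have hproj : ∀ k, (inner ℝ (w k - p k) (wstar - p k) : ℝ) ≤ 0 := by
    intro k
    have hinf : ‖w k - p k‖ = ⨅ v : C k, ‖w k - v‖ := by
      haveI : Nonempty (C k) := ⟨⟨p k, (hp k).1⟩⟩
      refine le_antisymm (le_ciInf fun v => (hp k).2 v v.2) ?_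
      have hbdd : BddBelow (Set.range fun v : C k => ‖w k - v‖) := by
        refine ⟨0, ?_⟩
        rintro x ⟨v, rfl⟩
        exact norm_nonneg _
      exact ciInf_le hbdd ⟨p k, (hp k).1⟩
    exact ((norm_eq_iInf_iff_real_inner_le_zero (hCcv k) (hp k).1).1 hinf) wstar (hws k)
  -- one-step Fejér inequality
  have key : ∀ k, μ k * (2 - μ k) * ‖w k - p k‖ ^ 2 ≤
      ‖w k - wstar‖ ^ 2 - ‖w (k + 1) - wstar‖ ^ 2 := by
    intro k
    have h1 : w (k + 1) - wstar = (1 - μ k) • (w k - p k) - (wstar - p k) := by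
      rw [hrec k]; module
    have h2 : w k - wstar = (w k - p k) - (wstar - p k) := by abel
    have e1 : ‖w (k + 1) - wstar‖ ^ 2 = (1 - μ k) ^ 2 * ‖w k - p k‖ ^ 2
        - 2 * ((1 - μ k) * (inner ℝ (w k - p k) (wstar - p k) : ℝ)) + ‖wstar - p k‖ ^ 2 := by
      rw [h1, norm_sub_sq_real, real_inner_smul_left, norm_smul, mul_pow, Real.norm_eq_abs, sq_abs]
      try ring
    have e2 : ‖w k - wstar‖ ^ 2 = ‖w k - p k‖ ^ 2
        - 2 * (inner ℝ (w k - p k) (wstar - p k) : ℝ) + ‖wstar - p k‖ ^ 2 := by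
      rw [h2, norm_sub_sq_real]; try ring
    have hB := hproj k
    have hμk := hμ k
    nlinarith [hμk.1, hμk.2, hε₁, hε₂, sq_nonneg (‖w k - p k‖)]
  have hsum : ∀ n : ℕ, ∑ k ∈ Finset.range n, μ k * (2 - μ k) * ‖w k - p k‖ ^ 2 ≤
      ‖w 0 - wstar‖ ^ 2 := by
    intro n
    calc ∑ k ∈ Finset.range n, μ k * (2 - μ k) * ‖w k - p k‖ ^ 2
        ≤ ∑ k ∈ Finset.range n, (‖w k - wstar‖ ^ 2 - ‖w (k + 1) - wstar‖ ^ 2) :=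
          Finset.sum_le_sum fun k _ => key k
      _ = ‖w 0 - wstar‖ ^ 2 - ‖w n - wstar‖ ^ 2 := by
          rw [Finset.sum_range_sub' (fun k => ‖w k - wstar‖ ^ 2)]
      _ ≤ ‖w 0 - wstar‖ ^ 2 := by nlinarith [sq_nonneg (‖w n - wstar‖)]
  refine ⟨hsum, ?_⟩
  have hnonneg : ∀ k, 0 ≤ μ k * (2 - μ k) * ‖w k - p k‖ ^ 2 := by
    intro k
    have := hμ k
    have : (0:ℝ) ≤ μ k * (2 - μ k) := by nlinarith [this.1, this.2]
    positivity
  have hsummable : Summable (fun k => μ k * (2 - μ k) * ‖w k - p k‖ ^ 2) :=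
    summable_of_sum_range_le hnonneg hsum
  have hterm : Tendsto (fun k => μ k * (2 - μ k) * ‖w k - p k‖ ^ 2) atTop (nhds 0) :=
    hsummable.tendsto_atTop_zero
  have hsq : Tendsto (fun k => ‖w k - p k‖ ^ 2) atTop (nhds 0) := by
    have hq : Tendsto (fun k => μ k * (2 - μ k) * ‖w k - p k‖ ^ 2 / (ε₁ * ε₂))
        atTop (nhds 0) := by
      simpa using hterm.div_const (ε₁ * ε₂)
    refine squeeze_zero (fun k => sq_nonneg _) (fun k => ?_) hq
    have hμk := hμ k
    rw [le_div_iff₀ (by positivity)]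
    have h2 : (0:ℝ) ≤ 2 - ε₂ - μ k := by linarith [hμk.2]
    have h1 : (0:ℝ) ≤ μ k - ε₁ := by linarith [hμk.1]
    nlinarith [mul_nonneg (mul_nonneg h1 h2) (sq_nonneg (‖w k - p k‖)),
      mul_nonneg (mul_nonneg hε₁.le h2) (sq_nonneg (‖w k - p k‖)),
      mul_nonneg (mul_nonneg hε₂.le h1) (sq_nonneg (‖w k - p k‖))]
  have : Tendsto (fun k => Real.sqrt (‖w k - p k‖ ^ 2)) atTop (nhds 0) := by
    simpa using hsq.sqrt
  simpa [Real.sqrt_sq (norm_nonneg _)] using this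
end
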